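/- Logical characterization of strong forward-reverse bisimilarity: P1 ~FRB P2 if and only if P1 and P2 satisfy the same formulas of the logic L_FRB with syntax φ ::= true | ¬φ | φ∧φ | ⟨a⟩φ | ⟨a†⟩φ, where ⟨a⟩ is the forward modality and ⟨a†⟩ the backward modality. -/

import Mathlib

inductive Proc (A : Type) : Type
  | nil : Proc A
  | pre : A → Proc A → Proc A
  | exe : A → Proc A → Proc A
  | choice : Proc A → Proc A → Proc A

inductive Initial {A : Type} : Proc A → Prop
  | nil : Initial .nil
  | pre {a : A} {P : Proc A} : Initial P → Initial (.pre a P)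
  | choice {P Q : Proc A} : Initial P → Initial Q → Initial (.choice P Q)

inductive Final {A : Type} : Proc A → Prop
  | nil : Final .nil
  | exe {a : A} {P : Proc A} : Final P → Final (.exe a P)
  | choiceL {P Q : Proc A} : Final P → Initial Q → Final (.choice P Q)
  | choiceR {P Q : Proc A} : Initial P → Final Q → Final (.choice P Q)

inductive Reachable {A : Type} : Proc A → Prop
  | nil : Reachable .nil
  | pre {a : A} {P : Proc A} : Initial P → Reachable (.pre a P)
  | exe {a : A} {P : Proc A} : Reachable P → Reachable (.exe a P)
  | choiceL {P Q : Proc A} : Reachable P → Initial Q → Reachable (.choice P Q)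
  | choiceR {P Q : Proc A} : Initial P → Reachable Q → Reachable (.choice P Q)

inductive Tr {A : Type} : Proc A → A → Proc A → Prop
  | actf {a : A} {P : Proc A} : Initial P → Tr (.pre a P) a (.exe a P)
  | actp {a b : A} {P P' : Proc A} : Tr P b P' → Tr (.exe a P) b (.exe a P')
  | chol {a : A} {P1 P1' P2 : Proc A} : Tr P1 a P1' → Initial P2 →
      Tr (.choice P1 P2) a (.choice P1' P2)
  | chor {a : A} {P1 P2 P2' : Proc A} : Tr P2 a P2' → Initial P1 →
      Tr (.choice P1 P2) a (.choice P1 P2')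

def IsFwdBisim {A : Type} (B : Proc A → Proc A → Prop) : Prop :=
  (∀ P Q, B P Q → B Q P) ∧
  (∀ P Q a P', B P Q → Tr P a P' → ∃ Q', Tr Q a Q' ∧ B P' Q')

def IsRevBisim {A : Type} (B : Proc A → Proc A → Prop) : Prop :=
  (∀ P Q, B P Q → B Q P) ∧
  (∀ P Q a P', B P Q → Tr P' a P → ∃ Q', Tr Q' a Q ∧ B P' Q')

def IsFRBisim {A : Type} (B : Proc A → Proc A → Prop) : Prop :=
  (∀ P Q, B P Q → B Q P) ∧
  (∀ P Q a P', B P Q → Tr P a P' → ∃ Q', Tr Q a Q' ∧ B P' Q') ∧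
  (∀ P Q a P', B P Q → Tr P' a P → ∃ Q', Tr Q' a Q ∧ B P' Q')

def FB {A : Type} (P Q : Proc A) : Prop := ∃ B, IsFwdBisim B ∧ B P Q

def RB {A : Type} (P Q : Proc A) : Prop := ∃ B, IsRevBisim B ∧ B P Q

def FRB {A : Type} (P Q : Proc A) : Prop := ∃ B, IsFRBisim B ∧ B P Q

def FBps {A : Type} (P Q : Proc A) : Prop :=
  ∃ B, IsFwdBisim B ∧ (∀ P' Q', B P' Q' → (Initial P' ↔ Initial Q')) ∧ B P Q

inductive FormFRB (A : Type) : Type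
  | tt : FormFRB A
  | neg : FormFRB A → FormFRB A
  | conj : FormFRB A → FormFRB A → FormFRB A
  | diam : A → FormFRB A → FormFRB A
  | diamB : A → FormFRB A → FormFRB A

def SatFRB {A : Type} : Proc A → FormFRB A → Prop
  | _, FormFRB.tt => True
  | P, FormFRB.neg φ => ¬ SatFRB P φ
  | P, FormFRB.conj φ ψ => SatFRB P φ ∧ SatFRB P ψ
  | P, FormFRB.diam a φ => ∃ P', Tr P a P' ∧ SatFRB P' φ
  | P, FormFRB.diamB a φ => ∃ P', Tr P' a P ∧ SatFRB P' φ

-- Auxiliary lemmas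

lemma tr_not_initial {A : Type} {P : Proc A} {a : A} {P' : Proc A}
    (h : Tr P a P') : ¬ Initial P' := by
  induction h with
  | actf _ => intro h; cases h
  | actp _ ih => intro h; cases h
  | chol _ _ ih => intro h; cases h with | choice h1 h2 => exact ih h1
  | chor _ _ ih => intro h; cases h with | choice h1 h2 => exact ih h2

lemma tr_unique {A : Type} {P Q R : Proc A} {a b : A}
    (h1 : Tr P a R) (h2 : Tr Q b R) : a = b ∧ P = Q := by
  induction h1 generalizing Q b with
  | @actf a P hP =>
    cases h2 with
    | actf _ => exact ⟨rfl, rfl⟩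
    | actp ht => exact absurd hP (tr_not_initial ht)
  | @actp a c P P' ht ih =>
    cases h2 with
    | actf hI => exact absurd hI (tr_not_initial ht)
    | actp ht2 =>
      obtain ⟨rfl, rfl⟩ := ih ht2
      exact ⟨rfl, rfl⟩
  | @chol a P1 P1' P2 ht hI ih =>
    cases h2 with
    | chol ht2 hI2 =>
      obtain ⟨rfl, rfl⟩ := ih ht2
      exact ⟨rfl, rfl⟩
    | chor ht2 hI2 => exact absurd hI2 (tr_not_initial ht)
  | @chor a P1 P2 P2' ht hI ih =>
    cases h2 with
    | chol ht2 hI2 => exact absurd hI2 (tr_not_initial ht)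
    | chor ht2 hI2 =>
      obtain ⟨rfl, rfl⟩ := ih ht2
      exact ⟨rfl, rfl⟩

def initB {A : Type} : Proc A → Bool
  | .nil => true
  | .pre _ P => initB P
  | .exe _ _ => false
  | .choice P Q => initB P && initB Q

lemma initB_iff {A : Type} (P : Proc A) : initB P = true ↔ Initial P := by
  induction P with
  | nil => simp [initB]; exact Initial.nil
  | pre a P ih =>
    simp only [initB, ih]
    constructor
    · exact Initial.pre
    · intro h; cases h; assumption
  | exe a P ih =>
    simp only [initB]
    constructor
    · intro h; cases h
    · intro h; cases h
  | choice P Q ihP ihQ =>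
    simp only [initB, Bool.and_eq_true, ihP, ihQ]
    constructor
    · rintro ⟨h1, h2⟩; exact Initial.choice h1 h2
    · intro h; cases h; exact ⟨by assumption, by assumption⟩

def succs {A : Type} : Proc A → List (A × Proc A)
  | .nil => []
  | .pre a P => if initB P then [(a, .exe a P)] else []
  | .exe a P => (succs P).map (fun p => (p.1, .exe a p.2))
  | .choice P Q =>
      (if initB Q then (succs P).map (fun p => (p.1, .choice p.2 Q)) else []) ++
      (if initB P then (succs Q).map (fun p => (p.1, .choice P p.2)) else [])

lemma mem_succs {A : Type} (P : Proc A) (a : A) (P' : Proc A) :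
    (a, P') ∈ succs P ↔ Tr P a P' := by
  induction P generalizing a P' with
  | nil =>
    simp only [succs, List.not_mem_nil, false_iff]
    intro h; cases h
  | pre b P ih =>
    simp only [succs]
    by_cases h : initB P
    · simp only [if_pos h, List.mem_singleton, Prod.mk.injEq]
      constructor
      · rintro ⟨rfl, rfl⟩; exact Tr.actf ((initB_iff P).mp h)
      · intro ht; cases ht; exact ⟨rfl, rfl⟩
    · simp only [if_neg h, List.not_mem_nil, false_iff]
      intro ht; cases ht with
      | actf hI => exact h ((initB_iff P).mpr hI)
  | exe b P ih =>
    simp only [succs, List.mem_map, Prod.mk.injEq]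
    constructor
    · rintro ⟨⟨c, Q⟩, hm, rfl, rfl⟩
      exact Tr.actp ((ih _ _).mp hm)
    · intro ht
      cases ht with
      | actp ht2 => exact ⟨(a, _), (ih _ _).mpr ht2, rfl, rfl⟩
  | choice P Q ihP ihQ =>
    simp only [succs, List.mem_append]
    constructor
    · rintro (h | h)
      · by_cases hQ : initB Q
        · rw [if_pos hQ] at h
          simp only [List.mem_map, Prod.mk.injEq] at h
          obtain ⟨⟨c, R⟩, hm, rfl, rfl⟩ := h
          exact Tr.chol ((ihP _ _).mp hm) ((initB_iff Q).mp hQ)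
        · rw [if_neg hQ] at h; cases h
      · by_cases hP : initB P
        · rw [if_pos hP] at h
          simp only [List.mem_map, Prod.mk.injEq] at h
          obtain ⟨⟨c, R⟩, hm, rfl, rfl⟩ := h
          exact Tr.chor ((ihQ _ _).mp hm) ((initB_iff P).mp hP)
        · rw [if_neg hP] at h; cases h
    · intro ht
      cases ht with
      | chol ht2 hI =>
        left
        rw [if_pos ((initB_iff Q).mpr hI)]
        simp only [List.mem_map, Prod.mk.injEq]
        exact ⟨(a, _), (ihP _ _).mpr ht2, rfl, rfl⟩
      | chor ht2 hI =>
        right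
        rw [if_pos ((initB_iff P).mpr hI)]
        simp only [List.mem_map, Prod.mk.injEq]
        exact ⟨(a, _), (ihQ _ _).mpr ht2, rfl, rfl⟩

lemma distinguishing {A : Type} {P Q : Proc A}
    (h : ¬ ∀ φ : FormFRB A, SatFRB P φ ↔ SatFRB Q φ) :
    ∃ φ, SatFRB P φ ∧ ¬ SatFRB Q φ := by
  push_neg at h
  obtain ⟨φ, hφ⟩ := h
  rcases hφ with ⟨hP, hQ⟩ | ⟨hP, hQ⟩
  · exact ⟨φ, hP, hQ⟩
  · exact ⟨FormFRB.neg φ, hP, fun h => h hQ⟩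

lemma distinguish_list {A : Type} (P : Proc A) (l : List (A × Proc A))
    (h : ∀ p ∈ l, ¬ ∀ φ : FormFRB A, SatFRB P φ ↔ SatFRB p.2 φ) :
    ∃ φ, SatFRB P φ ∧ ∀ p ∈ l, ¬ SatFRB p.2 φ := by
  induction l with
  | nil => exact ⟨FormFRB.tt, trivial, fun p hp => absurd hp List.not_mem_nil⟩
  | cons q l ih =>
    obtain ⟨φ, hφ1, hφ2⟩ := ih (fun p hp => h p (List.mem_cons_of_mem q hp))
    obtain ⟨ψ, hψ1, hψ2⟩ := distinguishing (h q List.mem_cons_self)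
    refine ⟨FormFRB.conj φ ψ, ⟨hφ1, hψ1⟩, ?_⟩
    rintro p hp ⟨h1, h2⟩
    rcases List.mem_cons.mp hp with rfl | hp'
    · exact hψ2 h2
    · exact hφ2 p hp' h1

theorem frb_logical_characterization {A : Type} (P1 P2 : Proc A) :
    FRB P1 P2 ↔ ∀ φ : FormFRB A, SatFRB P1 φ ↔ SatFRB P2 φ := by
  classical
  constructor
  · rintro ⟨B, ⟨hsym, hfwd, hbwd⟩, hB⟩ φ
    have key : ∀ φ : FormFRB A, ∀ P Q : Proc A, B P Q → (SatFRB P φ ↔ SatFRB Q φ) := by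
      intro φ
      induction φ with
      | tt => intro P Q _; exact Iff.rfl
      | neg φ ih => intro P Q h; exact not_congr (ih P Q h)
      | conj φ ψ ihφ ihψ => intro P Q h; exact and_congr (ihφ P Q h) (ihψ P Q h)
      | diam a φ ih =>
        intro P Q h
        constructor
        · rintro ⟨P', ht, hs⟩
          obtain ⟨Q', htQ, hB'⟩ := hfwd P Q a P' h ht
          exact ⟨Q', htQ, (ih P' Q' hB').mp hs⟩
        · rintro ⟨Q', ht, hs⟩
          obtain ⟨P', htP, hB'⟩ := hfwd Q P a Q' (hsym P Q h) ht
          exact ⟨P', htP, (ih Q' P' hB').mp hs⟩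
      | diamB a φ ih =>
        intro P Q h
        constructor
        · rintro ⟨P', ht, hs⟩
          obtain ⟨Q', htQ, hB'⟩ := hbwd P Q a P' h ht
          exact ⟨Q', htQ, (ih P' Q' hB').mp hs⟩
        · rintro ⟨Q', ht, hs⟩
          obtain ⟨P', htP, hB'⟩ := hbwd Q P a Q' (hsym P Q h) ht
          exact ⟨P', htP, (ih Q' P' hB').mp hs⟩
    exact key φ P1 P2 hB
  · intro h
    refine ⟨fun P Q => ∀ φ : FormFRB A, SatFRB P φ ↔ SatFRB Q φ, ⟨?_, ?_, ?_⟩, h⟩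
    · intro P Q h φ; exact (h φ).symm
    · intro P Q a P' hPQ ht
      by_contra hc
      push_neg at hc
      set l := (succs Q).filter (fun p => p.1 = a) with hl
      have hmem : ∀ p ∈ l, ¬ ∀ φ : FormFRB A, SatFRB P' φ ↔ SatFRB p.2 φ := by
        intro p hp
        obtain ⟨b, Q'⟩ := p
        rw [hl, List.mem_filter] at hp
        obtain ⟨hp1, hp2⟩ := hp
        simp only [decide_eq_true_eq] at hp2
        subst hp2
        obtain ⟨φ, hφ⟩ := hc Q' ((mem_succs Q _ Q').mp hp1)
        intro hall
        have := hall φ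
        tauto
      obtain ⟨φ, hφ1, hφ2⟩ := distinguish_list P' l hmem
      have hP : SatFRB P (FormFRB.diam a φ) := ⟨P', ht, hφ1⟩
      have hQ : SatFRB Q (FormFRB.diam a φ) := (hPQ (FormFRB.diam a φ)).mp hP
      obtain ⟨Q', htQ, hsQ⟩ := hQ
      have : (a, Q') ∈ l := by
        rw [hl, List.mem_filter]
        exact ⟨(mem_succs Q a Q').mpr htQ, by simp⟩
      exact hφ2 (a, Q') this hsQ
    · intro P Q a P' hPQ ht
      have hP : SatFRB P (FormFRB.diamB a FormFRB.tt) := ⟨P', ht, trivial⟩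
      obtain ⟨Q', htQ, -⟩ := (hPQ (FormFRB.diamB a FormFRB.tt)).mp hP
      refine ⟨Q', htQ, fun φ => ⟨?_, ?_⟩⟩
      · intro hs
        have : SatFRB Q (FormFRB.diamB a φ) :=
          (hPQ (FormFRB.diamB a φ)).mp ⟨P', ht, hs⟩
        obtain ⟨Q'', ht2, h2⟩ := this
        obtain ⟨-, rfl⟩ := tr_unique ht2 htQ
        exact h2
      · intro hs
        have : SatFRB P (FormFRB.diamB a φ) :=
          (hPQ (FormFRB.diamB a φ)).mpr ⟨Q', htQ, hs⟩
        obtain ⟨P'', ht2, h2⟩ := this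
        obtain ⟨-, rfl⟩ := tr_unique ht2 ht
        exact h2
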